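/- K(sin(π/12)) = ½·√(π/√3)·Γ(1/3)/Γ(5/6). -/

import Mathlib

open Real MeasureTheory Set

lemma beta_real :
    ∫ t in Set.Ioo (0:ℝ) 1, t ^ ((1:ℝ)/6 - 1) * (1-t) ^ ((1:ℝ)/2 - 1)
      = Real.Gamma (1/6) * Real.Gamma (1/2) / Real.Gamma (2/3) := by
  have hb := Complex.Gamma_mul_Gamma_eq_betaIntegral (s := 1/6) (t := 1/2) (by norm_num) (by norm_num)
  have key : Complex.betaIntegral (1/6) (1/2)
      = ((∫ t in Set.Ioo (0:ℝ) 1, t ^ ((1:ℝ)/6 - 1) * (1-t) ^ ((1:ℝ)/2 - 1) : ℝ) : ℂ) := by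
    rw [Complex.betaIntegral, intervalIntegral.integral_of_le (by norm_num : (0:ℝ) ≤ 1),
      MeasureTheory.integral_Ioc_eq_integral_Ioo]
    have step : ∫ x in Set.Ioo (0:ℝ) 1, (x:ℂ) ^ ((1:ℂ)/6 - 1) * ((1:ℂ)-x) ^ ((1:ℂ)/2 - 1)
        = ∫ x in Set.Ioo (0:ℝ) 1, ((x ^ ((1:ℝ)/6 - 1) * (1-x) ^ ((1:ℝ)/2 - 1) : ℝ) : ℂ) := by
      apply MeasureTheory.setIntegral_congr_fun measurableSet_Ioo
      intro x hx
      obtain ⟨hx0, hx1⟩ := hx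
      beta_reduce
      rw [Complex.ofReal_mul, Complex.ofReal_cpow hx0.le,
        Complex.ofReal_cpow (by linarith : (0:ℝ) ≤ 1-x)]
      push_cast
      norm_num
    rw [step]
    exact integral_ofReal
  have hG1 : Complex.Gamma (1/6) = ((Real.Gamma (1/6) : ℝ) : ℂ) := by
    rw [show (1:ℂ)/6 = ((1/6:ℝ):ℂ) by push_cast; ring, Complex.Gamma_ofReal]
  have hG2 : Complex.Gamma (1/2) = ((Real.Gamma (1/2) : ℝ) : ℂ) := by
    rw [show (1:ℂ)/2 = ((1/2:ℝ):ℂ) by push_cast; ring, Complex.Gamma_ofReal]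
  have hG3 : Complex.Gamma (1/6 + 1/2) = ((Real.Gamma (2/3) : ℝ) : ℂ) := by
    rw [show (1:ℂ)/6 + 1/2 = ((2/3:ℝ):ℂ) by push_cast; ring, Complex.Gamma_ofReal]
  rw [key, hG1, hG2, hG3, ← Complex.ofReal_mul, ← Complex.ofReal_mul] at hb
  have h := Complex.ofReal_injective hb
  have hg' : Real.Gamma (2/3) ≠ 0 := (Real.Gamma_pos_of_pos (by norm_num)).ne'
  field_simp
  linarith [h]

lemma image_invcube : (fun x : ℝ => (x^3)⁻¹) '' Set.Ioi 1 = Set.Ioo (0:ℝ) 1 := by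
  ext y
  constructor
  · rintro ⟨x, hx, rfl⟩
    have hx1 : (1:ℝ) < x := hx
    have h3 : (1:ℝ) < x^3 := one_lt_pow₀ hx1 (by norm_num)
    exact ⟨by positivity, by rw [inv_lt_one_iff₀]; right; exact h3⟩
  · rintro ⟨hy0, hy1⟩
    refine ⟨y ^ (-(1:ℝ)/3), ?_, ?_⟩
    · rw [Set.mem_Ioi, Real.one_lt_rpow_iff_of_pos hy0]
      right
      exact ⟨hy1, by norm_num⟩
    · show ((y ^ (-(1:ℝ)/3)) ^ (3:ℕ))⁻¹ = y
      have : (y ^ (-(1:ℝ)/3)) ^ (3:ℕ) = y ^ (-(1:ℝ)) := by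
        rw [← Real.rpow_natCast (y ^ (-(1:ℝ)/3)) 3, ← Real.rpow_mul hy0.le]
        norm_num
      rw [this, Real.rpow_neg_one, inv_inv]

lemma inj_invcube : Set.InjOn (fun x : ℝ => (x^3)⁻¹) (Set.Ioi 1) := by
  intro x hx y hy h
  simp only at h
  exact (Odd.strictMono_pow (R := ℝ) ⟨1, by norm_num⟩).injective (inv_injective h)

lemma stepA :
    ∫ t in Set.Ioo (0:ℝ) 1, t ^ ((1:ℝ)/6 - 1) * (1-t) ^ ((1:ℝ)/2 - 1)
      = ∫ x in Set.Ioi (1:ℝ), 3 / Real.sqrt (x^3 - 1) := by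
  have hder : ∀ x ∈ Set.Ioi (1:ℝ), HasDerivWithinAt (fun x : ℝ => (x^3)⁻¹)
      (-(3 * x^2) / (x^3)^2) (Set.Ioi 1) x := by
    intro x hx
    have hx0 : x ≠ 0 := by have : (1:ℝ) < x := hx; linarith
    have := (hasDerivAt_pow 3 x).inv (by positivity)
    exact (this.congr_deriv (by norm_num)).hasDerivWithinAt
  have key := MeasureTheory.integral_image_eq_integral_abs_deriv_smul measurableSet_Ioi hder
    inj_invcube (fun t => t ^ ((1:ℝ)/6 - 1) * (1-t) ^ ((1:ℝ)/2 - 1))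
  rw [image_invcube] at key
  rw [key]
  apply MeasureTheory.setIntegral_congr_fun measurableSet_Ioi
  intro x hx
  have hx1 : (1:ℝ) < x := hx
  have hx0 : (0:ℝ) < x := by linarith
  have hu1 : (1:ℝ) < x^3 := one_lt_pow₀ hx1 (by norm_num)
  have hu0 : (0:ℝ) < x^3 := by positivity
  have hs0 : (0:ℝ) < x^3 - 1 := by linarith
  have hsq : (0:ℝ) < Real.sqrt (x^3-1) := Real.sqrt_pos.mpr hs0
  simp only [smul_eq_mul]
  have hA : |(-(3 * x^2) / (x^3)^2)| = 3 * x^2 / (x^3)^2 := by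
    rw [neg_div, abs_neg, abs_of_nonneg (by positivity)]
  have hB : ((x^3)⁻¹) ^ ((1:ℝ)/6 - 1) = x ^ ((5:ℝ)/2) := by
    rw [Real.inv_rpow hu0.le, ← Real.rpow_neg hu0.le, ← Real.rpow_natCast x 3,
      ← Real.rpow_mul hx0.le]
    norm_num
  have hC : (1-(x^3)⁻¹) ^ ((1:ℝ)/2 - 1) = x ^ ((3:ℝ)/2) / Real.sqrt (x^3-1) := by
    rw [show (1-(x^3)⁻¹) = (x^3-1)/x^3 by field_simp,
      Real.div_rpow hs0.le hu0.le,
      show (1:ℝ)/2 - 1 = -(1/2) by norm_num,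
      Real.rpow_neg hs0.le, Real.rpow_neg hu0.le,
      ← Real.sqrt_eq_rpow, ← Real.sqrt_eq_rpow,
      Real.sqrt_eq_rpow (x^3), ← Real.rpow_natCast x 3, ← Real.rpow_mul hx0.le]
    rw [div_eq_mul_inv, inv_inv,
      show ((3:ℕ):ℝ)*(1/2) = (3:ℝ)/2 by push_cast; norm_num]
    push_cast
    ring
  rw [hA, hB, hC]
  have hx52 : x ^ ((5:ℝ)/2) * x ^ ((3:ℝ)/2) = x^4 := by
    rw [← Real.rpow_add hx0, ← Real.rpow_natCast x 4]
    norm_num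
  field_simp
  rw [hx52]

noncomputable def FB (φ : ℝ) : ℝ := 1 + Real.sqrt 3 * Real.tan (φ/2) ^ 2

lemma tan_half_pos {φ : ℝ} (h : φ ∈ Set.Ioo (0:ℝ) π) : 0 < Real.tan (φ/2) :=
  Real.tan_pos_of_pos_of_lt_pi_div_two (by linarith [h.1]) (by linarith [h.2])

lemma cos_half_pos {φ : ℝ} (h : φ ∈ Set.Ioo (0:ℝ) π) : 0 < Real.cos (φ/2) :=
  Real.cos_pos_of_mem_Ioo ⟨by linarith [h.1, Real.pi_pos], by linarith [h.2]⟩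

lemma image_FB : FB '' Set.Ioo 0 π = Set.Ioi (1:ℝ) := by
  ext y
  constructor
  · rintro ⟨φ, hφ, rfl⟩
    have ht := tan_half_pos hφ
    have h3 : (0:ℝ) < Real.sqrt 3 := Real.sqrt_pos.mpr (by norm_num)
    have : 0 < Real.sqrt 3 * Real.tan (φ/2) ^ 2 := by positivity
    simp only [FB, Set.mem_Ioi]
    linarith
  · intro hy
    have hy1 : (1:ℝ) < y := hy
    have h3 : (0:ℝ) < Real.sqrt 3 := Real.sqrt_pos.mpr (by norm_num)
    set a := Real.sqrt ((y-1)/Real.sqrt 3) with ha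
    have ha0 : 0 < a := Real.sqrt_pos.mpr (div_pos (by linarith) h3)
    refine ⟨2 * Real.arctan a, ⟨?_, ?_⟩, ?_⟩
    · have : 0 < Real.arctan a := by
        rw [← Real.arctan_zero]; exact Real.arctan_strictMono ha0
      linarith
    · have := Real.arctan_lt_pi_div_two a
      linarith
    · show 1 + Real.sqrt 3 * Real.tan ((2 * Real.arctan a)/2) ^ 2 = y
      rw [mul_div_cancel_left₀ (Real.arctan a) two_ne_zero, Real.tan_arctan,
        Real.sq_sqrt (le_of_lt (div_pos (by linarith) h3))]
      field_simp
      ring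

lemma inj_FB : Set.InjOn FB (Set.Ioo 0 π) := by
  intro x hx y hy h
  have h3 : (0:ℝ) < Real.sqrt 3 := Real.sqrt_pos.mpr (by norm_num)
  have htx := tan_half_pos hx
  have hty := tan_half_pos hy
  simp only [FB] at h
  have h2 : Real.tan (x/2) ^ 2 = Real.tan (y/2) ^ 2 := by
    have := add_left_cancel h
    exact mul_left_cancel₀ h3.ne' this
  have ht : Real.tan (x/2) = Real.tan (y/2) := by nlinarith
  have := Real.injOn_tan (by constructor <;> [linarith [hx.1, Real.pi_pos]; linarith [hx.2]])
    (by constructor <;> [linarith [hy.1, Real.pi_pos]; linarith [hy.2]]) ht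
  linarith

lemma deriv_FB : ∀ φ ∈ Set.Ioo (0:ℝ) π, HasDerivWithinAt FB
    (Real.sqrt 3 * Real.tan (φ/2) * (1 + Real.tan (φ/2)^2)) (Set.Ioo 0 π) φ := by
  intro φ hφ
  have hc := (cos_half_pos hφ).ne'
  have h2 : HasDerivAt (fun φ:ℝ => φ/2) (1/2) φ := by
    simpa using (hasDerivAt_id φ).div_const 2
  have ht : HasDerivAt (fun φ:ℝ => Real.tan (φ/2)) (1/Real.cos (φ/2)^2 * (1/2)) φ :=
    (Real.hasDerivAt_tan hc).comp (h := fun φ : ℝ => φ/2) φ h2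
  have hsq := ht.pow 2
  have hfin := (hsq.const_mul (Real.sqrt 3)).const_add 1
  refine hfin.hasDerivWithinAt.congr_deriv ?_
  rw [← Real.inv_one_add_tan_sq hc]
  have h1t : (0:ℝ) < 1 + Real.tan (φ/2)^2 := by positivity
  field_simp
  ring

lemma FB_point {φ : ℝ} (hφ : φ ∈ Set.Ioo (0:ℝ) π) :
    |Real.sqrt 3 * Real.tan (φ/2) * (1 + Real.tan (φ/2)^2)| * (3 / Real.sqrt ((FB φ)^3 - 1))
      = Real.sqrt (3*Real.sqrt 3) *
        (1 / Real.sqrt (1 - (2-Real.sqrt 3)/4 * Real.sin φ^2)) := by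
  set t := Real.tan (φ/2) with htdef
  have ht0 : 0 < t := tan_half_pos hφ
  have hc0 : 0 < Real.cos (φ/2) := cos_half_pos hφ
  have hs3 : Real.sqrt 3 ^ 2 = 3 := Real.sq_sqrt (by norm_num)
  have hs30 : (0:ℝ) < Real.sqrt 3 := Real.sqrt_pos.mpr (by norm_num)
  have h330 : (0:ℝ) < 3 * Real.sqrt 3 := by positivity
  have h33 : Real.sqrt (3*Real.sqrt 3) ^ 2 = 3 * Real.sqrt 3 := Real.sq_sqrt h330.le
  have h33p : (0:ℝ) < Real.sqrt (3*Real.sqrt 3) := Real.sqrt_pos.mpr h330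
  have hc2 : Real.cos (φ/2)^2 = (1+t^2)⁻¹ := (Real.inv_one_add_tan_sq hc0.ne').symm
  have hsinh : Real.sin (φ/2) = t * Real.cos (φ/2) := by
    rw [htdef, Real.tan_eq_sin_div_cos]; field_simp
  have hsin : Real.sin φ = 2 * t * Real.cos (φ/2)^2 := by
    have h2m := Real.sin_two_mul (φ/2)
    rw [show 2*(φ/2) = φ by ring] at h2m
    rw [h2m, hsinh]; ring
  have h1t : (0:ℝ) < 1 + t^2 := by positivity
  have hsin2 : Real.sin φ^2 = 4*t^2/(1+t^2)^2 := by
    rw [hsin, hc2]; field_simp; ring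
  have hP0 : (0:ℝ) < t^4 + Real.sqrt 3 * t^2 + 1 := by positivity
  have hden : 1 - (2-Real.sqrt 3)/4 * Real.sin φ^2
      = (t^4 + Real.sqrt 3 * t^2 + 1)/(1+t^2)^2 := by
    rw [hsin2]; field_simp; ring
  have hfb : (FB φ)^3 - 1 = 3*Real.sqrt 3 * (t^2 * (t^4 + Real.sqrt 3 * t^2 + 1)) := by
    simp only [FB, ← htdef]
    linear_combination (Real.sqrt 3 * t^6) * hs3
  have hsq1 : Real.sqrt ((FB φ)^3 - 1)
      = Real.sqrt (3*Real.sqrt 3) * (t * Real.sqrt (t^4 + Real.sqrt 3 * t^2 + 1)) := by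
    rw [hfb, Real.sqrt_mul h330.le, Real.sqrt_mul (by positivity : (0:ℝ) ≤ t^2),
      Real.sqrt_sq ht0.le]
  have hsq2 : Real.sqrt (1 - (2-Real.sqrt 3)/4 * Real.sin φ^2)
      = Real.sqrt (t^4 + Real.sqrt 3 * t^2 + 1) / (1+t^2) := by
    rw [hden, Real.sqrt_div hP0.le, Real.sqrt_sq h1t.le]
  have hQ0 : (0:ℝ) < Real.sqrt (t^4 + Real.sqrt 3 * t^2 + 1) := Real.sqrt_pos.mpr hP0
  rw [abs_of_pos (by positivity), hsq1, hsq2]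
  have h4 : Real.sqrt (Real.sqrt 3) ^ 2 = Real.sqrt 3 := Real.sq_sqrt hs30.le
  field_simp
  rw [Real.sq_sqrt (by positivity)]

lemma stepB :
    ∫ x in Set.Ioi (1:ℝ), 3 / Real.sqrt (x^3 - 1)
      = ∫ φ in Set.Ioo (0:ℝ) π, Real.sqrt (3*Real.sqrt 3) *
          (1 / Real.sqrt (1 - (2-Real.sqrt 3)/4 * Real.sin φ^2)) := by
  have key := MeasureTheory.integral_image_eq_integral_abs_deriv_smul measurableSet_Ioo
    deriv_FB inj_FB (fun x => 3 / Real.sqrt (x^3-1))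
  rw [image_FB] at key
  rw [key]
  apply MeasureTheory.setIntegral_congr_fun measurableSet_Ioo
  intro φ hφ
  simp only [smul_eq_mul]
  exact FB_point hφ

lemma sqrt3_lt_two : Real.sqrt 3 < 2 := by
  nlinarith [Real.sq_sqrt (by norm_num : (0:ℝ) ≤ 3), Real.sqrt_nonneg 3]

lemma den_pos (x : ℝ) : 0 < 1 - (2-Real.sqrt 3)/4 * Real.sin x ^ 2 := by
  nlinarith [Real.sin_sq_le_one x, sqrt3_lt_two, Real.sqrt_nonneg 3, sq_nonneg (Real.sin x)]

lemma cont_g : Continuous (fun φ : ℝ => 1 / Real.sqrt (1 - (2-Real.sqrt 3)/4 * Real.sin φ ^ 2)) := by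
  apply Continuous.div continuous_const
  · exact Real.continuous_sqrt.comp (by continuity)
  · intro x
    exact (Real.sqrt_pos.mpr (den_pos x)).ne'

lemma sym_g :
    ∫ φ in Set.Ioo (0:ℝ) π, 1 / Real.sqrt (1 - (2-Real.sqrt 3)/4 * Real.sin φ ^ 2)
      = 2 * ∫ θ in (0:ℝ)..(π/2), 1 / Real.sqrt (1 - (2-Real.sqrt 3)/4 * Real.sin θ ^ 2) := by
  set g := fun φ : ℝ => 1 / Real.sqrt (1 - (2-Real.sqrt 3)/4 * Real.sin φ ^ 2) with hg
  have hint : ∀ a b : ℝ, IntervalIntegrable g volume a b := fun a b => cont_g.intervalIntegrable a b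
  have h1 : ∫ φ in Set.Ioo (0:ℝ) π, g φ = ∫ φ in (0:ℝ)..π, g φ := by
    rw [intervalIntegral.integral_of_le Real.pi_pos.le, MeasureTheory.integral_Ioc_eq_integral_Ioo]
  have h2 : ∫ φ in (0:ℝ)..π, g φ = (∫ φ in (0:ℝ)..(π/2), g φ) + ∫ φ in (π/2:ℝ)..π, g φ :=
    (intervalIntegral.integral_add_adjacent_intervals (hint 0 (π/2)) (hint (π/2) π)).symm
  have h3 : ∫ φ in (π/2:ℝ)..π, g φ = ∫ φ in (0:ℝ)..(π/2), g φ := by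
    have := intervalIntegral.integral_comp_sub_left (a := 0) (b := π/2) g π
    rw [show π - π/2 = π/2 by ring, sub_zero] at this
    rw [← this]
    apply intervalIntegral.integral_congr
    intro x _
    simp only [hg, Real.sin_pi_sub]
  rw [h1, h2, h3]
  ring

lemma sin_pi12_sq : Real.sin (π/12) ^ 2 = (2 - Real.sqrt 3)/4 := by
  have hc := Real.cos_sq (π/12)
  have hs := Real.sin_sq (π/12)
  rw [show 2 * (π/12) = π/6 by ring, Real.cos_pi_div_six] at hc
  rw [hs, hc]
  ring

lemma hG16 : Real.Gamma (1/6) * Real.Gamma (5/6) = 2*π := by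
  have h := Real.Gamma_mul_Gamma_one_sub (1/6)
  rw [show (1:ℝ) - 1/6 = 5/6 by norm_num, show π * (1/6) = π/6 by ring,
    Real.sin_pi_div_six] at h
  rw [h]; ring

lemma hG13 : Real.Gamma (1/3) * Real.Gamma (2/3) = 2*π/Real.sqrt 3 := by
  have h := Real.Gamma_mul_Gamma_one_sub (1/3)
  rw [show (1:ℝ) - 1/3 = 2/3 by norm_num, show π * (1/3) = π/3 by ring,
    Real.sin_pi_div_three] at h
  rw [h]
  rw [div_div_eq_mul_div]
  ring

lemma key_sqrt : Real.sqrt (π/Real.sqrt 3) * Real.sqrt (3*Real.sqrt 3)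
    = Real.sqrt 3 * Real.sqrt π := by
  have h3 : (0:ℝ) < Real.sqrt 3 := Real.sqrt_pos.mpr (by norm_num)
  have hs3 : Real.sqrt 3 ^ 2 = 3 := Real.sq_sqrt (by norm_num)
  rw [← Real.sqrt_mul (by positivity : (0:ℝ) ≤ π/Real.sqrt 3)]
  rw [show π/Real.sqrt 3 * (3*Real.sqrt 3) = 3*π * (Real.sqrt 3 / Real.sqrt 3) by ring,
    div_self h3.ne', mul_one, Real.sqrt_mul (by norm_num : (0:ℝ) ≤ 3)]

lemma hG13' : Real.sqrt 3 * (Real.Gamma (1/3) * Real.Gamma (2/3)) = 2*π := by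
  have h3 : (0:ℝ) < Real.sqrt 3 := Real.sqrt_pos.mpr (by norm_num)
  rw [hG13]
  field_simp

theorem K_sin15_gamma' :
    ∫ θ in (0:ℝ)..(π/2),
        1 / Real.sqrt (1 - (Real.sin (π/12))^2 * Real.sin θ ^ 2)
      = (1/2) * Real.sqrt (π / Real.sqrt 3) *
          (Real.Gamma (1/3) / Real.Gamma (5/6)) := by
  simp only [sin_pi12_sq]
  have h33p : (0:ℝ) < Real.sqrt (3*Real.sqrt 3) := Real.sqrt_pos.mpr (by positivity)
  have hchain : Real.Gamma (1/6) * Real.Gamma (1/2) / Real.Gamma (2/3)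
      = Real.sqrt (3*Real.sqrt 3) *
        (2 * ∫ θ in (0:ℝ)..(π/2), 1 / Real.sqrt (1 - (2-Real.sqrt 3)/4 * Real.sin θ ^ 2)) := by
    rw [← beta_real, stepA, stepB, MeasureTheory.integral_const_mul, sym_g]
  have htarget : Real.sqrt (3*Real.sqrt 3) *
      (2 * ((1/2) * Real.sqrt (π / Real.sqrt 3) * (Real.Gamma (1/3) / Real.Gamma (5/6))))
      = Real.Gamma (1/6) * Real.Gamma (1/2) / Real.Gamma (2/3) := by
    rw [Real.Gamma_one_half_eq]
    have h56 : Real.Gamma (5/6) ≠ 0 := (Real.Gamma_pos_of_pos (by norm_num)).ne'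
    have h23 : Real.Gamma (2/3) ≠ 0 := (Real.Gamma_pos_of_pos (by norm_num)).ne'
    field_simp
    linear_combination Real.Gamma (1/3) * Real.Gamma (2/3) * key_sqrt
      + Real.sqrt π * hG13' - Real.sqrt π * hG16
  rw [← htarget] at hchain
  have := mul_left_cancel₀ h33p.ne' hchain
  linarith [this]
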